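/- Let Δ = |Σ̂(β - β̂)| (coordinatewise absolute value) for a symmetric PSD matrix Σ̂ ∈ ℝ^{p×p} with λ_max(Σ̂) ≤ Λ, and suppose Δ_j ≥ (1-η)λ for every j with β̂_j ≠ 0, where η ∈ (0,1), λ > 0, and that (β-β̂)^T Σ̂ (β-β̂) ≤ (1+η)λ‖β-β̂‖₁. Then the number of nonzero coordinates of β̂ satisfies ŝ ≤ Λ(1+η)‖β-β̂‖₁ / ((1-η)²λ). -/

import Mathlib

open Finset Matrix

lemma psd_smul_sub_sq {p : ℕ} (A : Matrix (Fin p) (Fin p) ℝ) (Λ : ℝ)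
    (hpsd : A.PosSemidef) (hmax : ∀ i, hpsd.1.eigenvalues i ≤ Λ) :
    (Λ • A - A * A).PosSemidef := by
  have hA := hpsd.1
  set U : Matrix (Fin p) (Fin p) ℝ := (hA.eigenvectorUnitary : Matrix (Fin p) (Fin p) ℝ) with hUdef
  have hU : Uᴴ * U = 1 := (Matrix.mem_unitaryGroup_iff').mp hA.eigenvectorUnitary.2
  set D : Matrix (Fin p) (Fin p) ℝ := diagonal (RCLike.ofReal ∘ hA.eigenvalues) with hDdef
  have hspec : A = U * D * Uᴴ := hA.spectral_theorem
  have hDD : D * D = diagonal (fun i => hA.eigenvalues i ^ 2) := by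
    rw [hDdef, diagonal_mul_diagonal]
    congr 1; funext i; simp [sq]
  have key : Λ • A - A * A
      = U * diagonal (fun i => Λ * hA.eigenvalues i - hA.eigenvalues i ^ 2) * Uᴴ := by
    have h2 : diagonal (fun i => Λ * hA.eigenvalues i - hA.eigenvalues i ^ 2)
        = Λ • D - D * D := by
      rw [hDD, hDdef]
      ext i j
      by_cases h : i = j <;> simp [h, diagonal, smul_eq_mul]
    rw [h2, hspec]
    rw [Matrix.mul_sub, Matrix.sub_mul]
    rw [mul_assoc (U * D) Uᴴ (U * D * Uᴴ), ← mul_assoc Uᴴ (U * D) Uᴴ, ← mul_assoc Uᴴ U D, hU,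
      one_mul]
    rw [Matrix.mul_smul, Matrix.smul_mul]
    noncomm_ring
  rw [key]
  apply Matrix.PosSemidef.mul_mul_conjTranspose_same
  refine Matrix.posSemidef_diagonal_iff.mpr fun i => ?_
  have h0 := hpsd.eigenvalues_nonneg i
  nlinarith [hmax i]


/-- Bound on the number of selected variables: if `Δ = |Σ̂(β - β̂)|` is at
least `(1-η)λ` on the support of `β̂`, `Σ̂` is PSD with `λmax(Σ̂) ≤ Λ`, and the
quadratic form satisfies `(β-β̂)ᵀΣ̂(β-β̂) ≤ (1+η)λ‖β-β̂‖₁`, then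
`ŝ ≤ Λ(1+η)‖β-β̂‖₁/((1-η)²λ)`. -/
theorem selected_variables_bound
    {p : ℕ} (β βhat : Fin p → ℝ) (Shat : Matrix (Fin p) (Fin p) ℝ)
    (Λ η lam : ℝ) (hΛ : 0 < Λ) (hη0 : 0 < η) (hη1 : η < 1) (hlam : 0 < lam)
    (hpsd : Shat.PosSemidef)
    (hmax : ∀ i, hpsd.1.eigenvalues i ≤ Λ)
    (hΔ : ∀ j, βhat j ≠ 0 →
      (1 - η) * lam ≤ |Shat.mulVec (fun k => β k - βhat k) j|)
    (hquad : (fun k => β k - βhat k) ⬝ᵥ (Shat *ᵥ fun k => β k - βhat k)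
        ≤ (1 + η) * lam * ∑ j, |β j - βhat j|) :
    ((Finset.univ.filter (fun j => βhat j ≠ 0)).card : ℝ)
      ≤ Λ * (1 + η) * (∑ j, |β j - βhat j|) / ((1 - η) ^ 2 * lam) := by
  set v : Fin p → ℝ := fun k => β k - βhat k with hv
  set w : Fin p → ℝ := Shat *ᵥ v with hw
  set s : Finset (Fin p) := Finset.univ.filter (fun j => βhat j ≠ 0) with hs
  set S : ℝ := ∑ j, |β j - βhat j| with hS
  -- Step 1: card * ((1-η)*lam)^2 ≤ w ⬝ᵥ w
  have step1 : (s.card : ℝ) * ((1 - η) * lam) ^ 2 ≤ w ⬝ᵥ w := by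
    have h1 : (s.card : ℝ) * ((1 - η) * lam) ^ 2 = ∑ j ∈ s, ((1 - η) * lam) ^ 2 := by
      rw [Finset.sum_const, nsmul_eq_mul]
    rw [h1, dotProduct]
    calc ∑ j ∈ s, ((1 - η) * lam) ^ 2 ≤ ∑ j ∈ s, w j * w j := by
          apply Finset.sum_le_sum
          intro j hj
          have hj' : βhat j ≠ 0 := by simpa [hs] using hj
          have := hΔ j hj'
          have h2 : ((1 - η) * lam) ^ 2 ≤ |w j| ^ 2 := by
            apply pow_le_pow_left₀ (by nlinarith) this
          calc ((1 - η) * lam) ^ 2 ≤ |w j| ^ 2 := h2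
            _ = w j * w j := by rw [sq_abs, sq]
      _ ≤ ∑ j, w j * w j := by
          apply Finset.sum_le_sum_of_subset_of_nonneg (Finset.subset_univ s)
          intro j _ _; exact mul_self_nonneg _
  -- Step 2: w ⬝ᵥ w ≤ Λ * (v ⬝ᵥ w)
  have step2 : w ⬝ᵥ w ≤ Λ * (v ⬝ᵥ w) := by
    have hP := psd_smul_sub_sq Shat Λ hpsd hmax
    have := hP.dotProduct_mulVec_nonneg v
    rw [star_trivial, sub_mulVec, dotProduct_sub, smul_mulVec, dotProduct_smul,
      ← mulVec_mulVec] at this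
    have hsym : v ⬝ᵥ (Shat *ᵥ w) = w ⬝ᵥ w := by
      rw [hw, Matrix.dotProduct_mulVec, ← Matrix.mulVec_transpose]
      congr 1
      rw [← Matrix.conjTranspose_eq_transpose_of_trivial, hpsd.1.eq]
    rw [hsym] at this
    have hvv : v ⬝ᵥ Shat *ᵥ v = v ⬝ᵥ w := rfl
    rw [hvv, smul_eq_mul] at this
    linarith [this]
  -- Combine
  have hvw : v ⬝ᵥ w ≤ (1 + η) * lam * S := hquad
  have hmain : (s.card : ℝ) * ((1 - η) * lam) ^ 2 ≤ Λ * ((1 + η) * lam * S) := by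
    calc (s.card : ℝ) * ((1 - η) * lam) ^ 2 ≤ w ⬝ᵥ w := step1
      _ ≤ Λ * (v ⬝ᵥ w) := step2
      _ ≤ Λ * ((1 + η) * lam * S) := by
          apply mul_le_mul_of_nonneg_left hvw hΛ.le
  rw [le_div_iff₀ (mul_pos (pow_pos (by linarith) 2) hlam)]
  nlinarith [hmain]
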